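/- Let X be a compact metric space, f : X → X a homeomorphism, λ ∈ (0,1), N ∈ ℕ, and φ, ψ : X → ℝ continuous functions. Assume: (P1) φ(x) + ψ(f(x)) < 2 log λ for all x ∈ X; (P2) every periodic point q of f with minimal period π > N satisfies ∑_{i=0}^{π-1} φ(f^i(q)) < π log λ and ∑_{i=0}^{π-1} ψ(f^i(q)) < π log λ; (P3) f has the periodic shadowing property; (P4) for every δ > 0 there exists a periodic point of f whose orbit is a δ-net of X; (P5) every periodic point of f has minimal period greater than N. Then there exist C ∈ ℝ and θ < 0 such that ∑_{i=0}^{n-1} φ(f^i(x)) ≤ C + nθ and ∑_{i=0}^{n-1} ψ(f^{-i}(x)) ≤ C + nθ for every x ∈ X and every n ≥ 1. -/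

import Mathlib

set_option maxHeartbeats 1000000

section Helpers

theorem homeo_zpow_natCast' {X : Type*} [MetricSpace X] (f : X ≃ₜ X) (t : ℕ) (z : X) :
    (f.toEquiv ^ (t : ℤ)) z = (⇑f)^[t] z := by
  rw [zpow_natCast]
  induction t generalizing z with
  | zero => rfl
  | succ k ih =>
    rw [pow_succ, Equiv.Perm.mul_apply, Function.iterate_succ_apply]
    exact ih (f z)

theorem homeo_zpow_mod' {X : Type*} [MetricSpace X] (f : X ≃ₜ X) (q : X) (m : ℕ) (hm : 0 < m)
    (hq : (⇑f)^[m] q = q) (i : ℤ) :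
    (f.toEquiv ^ i) q = (⇑f)^[(i % m).toNat] q := by
  set e := f.toEquiv with he
  have hfix : (e ^ (m : ℤ)) q = q := by rw [homeo_zpow_natCast']; exact hq
  have hfix' : (e ^ (m : ℤ))⁻¹ q = q := by
    conv_lhs => rw [← hfix]
    exact (e ^ (m : ℤ)).symm_apply_apply q
  have hk : ∀ k : ℤ, ((e ^ (m : ℤ)) ^ k) q = q := by
    intro k
    induction k using Int.induction_on with
    | zero => rfl
    | succ j ih => rw [zpow_add_one, Equiv.Perm.mul_apply, hfix, ih]
    | pred j ih => rw [zpow_sub_one, Equiv.Perm.mul_apply, hfix', ih]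
  have h1 : (e ^ i) q = (e ^ (i % m)) q := by
    conv_lhs => rw [show i = i % m + m * (i / m) by rw [Int.emod_add_mul_ediv]]
    rw [zpow_add, Equiv.Perm.mul_apply, zpow_mul, hk]
  have hnn : (0 : ℤ) ≤ i % m := Int.emod_nonneg i (by exact_mod_cast hm.ne')
  rw [h1, ← homeo_zpow_natCast' f, Int.toNat_of_nonneg hnn]

theorem sum_mod_block' (F : ℕ → ℝ) (P c : ℕ) :
    ∑ t ∈ Finset.range (c * P), F (t % P) = c * ∑ r ∈ Finset.range P, F r := by
  induction c with
  | zero => simp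
  | succ c ih =>
    rw [Nat.succ_mul, Finset.sum_range_add, ih]
    have h : ∀ j ∈ Finset.range P, F ((c * P + j) % P) = F j := by
      intro j hj
      rw [Nat.add_comm, Nat.add_mul_mod_self_right, Nat.mod_eq_of_lt (Finset.mem_range.mp hj)]
    rw [Finset.sum_congr rfl h]
    push_cast; ring

theorem exists_net_index' (m i₀ k₀ : ℕ) (hm : 0 < m) :
    ∃ L : ℕ, 1 ≤ L ∧ L ≤ m ∧ (i₀ + L) % m = k₀ % m := by
  set t : ℤ := ((k₀ : ℤ) - i₀) % m with ht
  have hmz : (m : ℤ) ≠ 0 := by exact_mod_cast hm.ne'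
  have ht0 : 0 ≤ t := Int.emod_nonneg _ hmz
  have htm : t < m := Int.emod_lt_of_pos _ (by exact_mod_cast hm)
  have hcong : ((i₀ : ℤ) + t) % m = (k₀ : ℤ) % m := by
    have h1 : t % m = ((k₀ : ℤ) - i₀) % m := by
      rw [ht, Int.emod_emod_of_dvd _ dvd_rfl]
    calc ((i₀ : ℤ) + t) % m = ((i₀ : ℤ) % m + t % m) % m := by rw [Int.add_emod]
      _ = ((i₀ : ℤ) % m + ((k₀ : ℤ) - i₀) % m) % m := by rw [h1]
      _ = ((i₀ : ℤ) + ((k₀ : ℤ) - i₀)) % m := by rw [← Int.add_emod]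
      _ = (k₀ : ℤ) % m := by ring_nf
  by_cases h0 : t = 0
  · refine ⟨m, hm, le_refl m, ?_⟩
    have h2 : ((i₀ : ℤ)) % m = (k₀ : ℤ) % m := by rw [← hcong, h0, add_zero]
    have hnat : i₀ % m = k₀ % m := by exact_mod_cast h2
    rw [Nat.add_mod_right, hnat]
  · refine ⟨t.toNat, by omega, by omega, ?_⟩
    have hc : ((t.toNat : ℤ)) = t := Int.toNat_of_nonneg ht0
    have h3 : ((i₀ + t.toNat : ℕ) : ℤ) % m = ((k₀ : ℕ) : ℤ) % m := by push_cast [hc]; exact hcong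
    exact_mod_cast h3

end Helpers

/-- `f` has the periodic shadowing property: every periodic `δ`-pseudo-orbit is
`ε`-shadowed by a periodic point of `f`. -/
def HasPeriodicShadowing {X : Type*} [MetricSpace X] (f : X ≃ₜ X) : Prop :=
  ∀ ε > (0 : ℝ), ∃ δ > (0 : ℝ), ∀ x : ℤ → X,
    (∀ i : ℤ, dist (f (x i)) (x (i + 1)) < δ) →
    (∃ n : ℕ, 1 ≤ n ∧ ∀ i : ℤ, x (i + n) = x i) →
    ∃ z : X, (∃ m : ℕ, 1 ≤ m ∧ (⇑f)^[m] z = z) ∧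
      ∀ i : ℤ, dist ((f.toEquiv ^ i) z) (x i) < ε

/-- The abstract form of Proposition 4.1: domination (P1), uniform contraction/expansion
at the period for periodic points of large minimal period (P2), periodic shadowing (P3),
periodic orbits forming `δ`-nets (P4) and absence of periodic points of small minimal
period (P5) imply uniform contraction of `φ`-sums along forward orbits and of `ψ`-sums
along backward orbits. -/
theorem uniform_hyperbolicity_of_periodic_data {X : Type*} [MetricSpace X]
    [CompactSpace X] (f : X ≃ₜ X) (lam : ℝ) (h0 : 0 < lam) (h1 : lam < 1) (N : ℕ)
    (φ ψ : X → ℝ) (hφ : Continuous φ) (hψ : Continuous ψ)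
    (P1 : ∀ x : X, φ x + ψ (f x) < 2 * Real.log lam)
    (P2 : ∀ q : X, N < Function.minimalPeriod (⇑f) q →
      (∑ i ∈ Finset.range (Function.minimalPeriod (⇑f) q), φ ((⇑f)^[i] q) <
        (Function.minimalPeriod (⇑f) q) * Real.log lam) ∧
      (∑ i ∈ Finset.range (Function.minimalPeriod (⇑f) q), ψ ((⇑f)^[i] q) <
        (Function.minimalPeriod (⇑f) q) * Real.log lam))
    (P3 : HasPeriodicShadowing f)
    (P4 : ∀ δ : ℝ, 0 < δ → ∃ q : X, (∃ m : ℕ, 1 ≤ m ∧ (⇑f)^[m] q = q) ∧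
      ∀ x : X, ∃ i : ℤ, dist x ((f.toEquiv ^ i) q) < δ)
    (P5 : ∀ q : X, (∃ m : ℕ, 1 ≤ m ∧ (⇑f)^[m] q = q) →
      N < Function.minimalPeriod (⇑f) q) :
    ∃ C : ℝ, ∃ θ : ℝ, θ < 0 ∧ ∀ x : X, ∀ n : ℕ, 1 ≤ n →
      (∑ i ∈ Finset.range n, φ ((⇑f)^[i] x) ≤ C + n * θ) ∧
      (∑ i ∈ Finset.range n, ψ ((⇑f.symm)^[i] x) ≤ C + n * θ) := by
  classical
  rcases isEmpty_or_nonempty X with hE | hNE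
  · exact ⟨0, -1, by norm_num, fun x => (hE.false x).elim⟩
  -- a common bound for |φ| and |ψ|
  obtain ⟨M₁, hM₁⟩ := isCompact_univ.exists_bound_of_continuousOn hφ.continuousOn
  obtain ⟨M₂, hM₂⟩ := isCompact_univ.exists_bound_of_continuousOn hψ.continuousOn
  set M : ℝ := max M₁ M₂ with hM
  have hMb : ∀ x : X, |φ x| ≤ M ∧ |ψ x| ≤ M := fun x =>
    ⟨le_trans (hM₁ x trivial) (le_max_left _ _), le_trans (hM₂ x trivial) (le_max_right _ _)⟩
  have hM0 : 0 ≤ M := le_trans (abs_nonneg _) (hMb hNE.some).1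
  have hlog : Real.log lam < 0 := Real.log_neg h0 h1
  set η : ℝ := -Real.log lam / 2 with hηdef
  have hηpos : 0 < η := by rw [hηdef]; linarith
  set θ : ℝ := Real.log lam / 2 with hθdef
  have hθneg : θ < 0 := by rw [hθdef]; linarith
  have hlogθ : Real.log lam + η = θ := by rw [hηdef, hθdef]; ring
  -- uniform continuity moduli
  have hUC : ∀ g : X → ℝ, Continuous g → ∃ ε > (0:ℝ), ∀ a b : X, dist a b < ε →
      |g a - g b| < η := by
    intro g hg
    have := CompactSpace.uniformContinuous_of_continuous hg
    rw [Metric.uniformContinuous_iff] at this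
    obtain ⟨ε, hε, h⟩ := this η hηpos
    exact ⟨ε, hε, fun a b hab => by rw [← Real.dist_eq]; exact h hab⟩
  obtain ⟨ε₁, hε₁, hUφ⟩ := hUC φ hφ
  obtain ⟨ε₂, hε₂, hUψ⟩ := hUC ψ hψ
  set ε : ℝ := min ε₁ ε₂ with hεdef
  have hεpos : 0 < ε := lt_min hε₁ hε₂
  have hUφ' : ∀ a b : X, dist a b < ε → |φ a - φ b| < η :=
    fun a b hab => hUφ a b (lt_of_lt_of_le hab (min_le_left _ _))
  have hUψ' : ∀ a b : X, dist a b < ε → |ψ a - ψ b| < η :=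
    fun a b hab => hUψ a b (lt_of_lt_of_le hab (min_le_right _ _))
  -- shadowing constant
  obtain ⟨δ, hδpos, hshad⟩ := P3 ε hεpos
  -- the δ-net periodic orbit
  obtain ⟨q, ⟨m, hm1, hqm⟩, hnet⟩ := P4 δ hδpos
  have hmpos : 0 < m := hm1
  have hnet' : ∀ y : X, ∃ j : ℕ, dist y ((⇑f)^[j] q) < δ := by
    intro y
    obtain ⟨i, hi⟩ := hnet y
    refine ⟨(i % m).toNat, ?_⟩
    rw [← homeo_zpow_mod' f q m hmpos hqm i]
    exact hi
  refine ⟨m * M, θ, hθneg, ?_⟩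
  intro x n hn
  -- the core claim for a general orbit segment
  have key : ∀ w : ℕ → X, (∀ r : ℕ, r + 1 < n → f (w r) = w (r + 1)) →
      (∑ r ∈ Finset.range n, φ (w r) ≤ m * M + n * θ) ∧
      (∑ r ∈ Finset.range n, ψ (w r) ≤ m * M + n * θ) := by
    intro w hw
    obtain ⟨i₀, hia⟩ := hnet' (f (w (n - 1)))
    obtain ⟨k₀, hkb⟩ := hnet' (w 0)
    obtain ⟨L, hL1, hLm, hLk⟩ := exists_net_index' m i₀ k₀ hmpos
    have hqper : Function.IsPeriodicPt (⇑f) m q := hqm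
    have hiter : (⇑f)^[i₀ + L] q = (⇑f)^[k₀] q := by
      rw [← hqper.iterate_mod_apply (i₀ + L), hLk, hqper.iterate_mod_apply k₀]
    set P : ℕ := n + L with hPdef
    have hnP : n < P := by omega
    have hPpos : 0 < P := by omega
    set W : ℕ → X := fun r => if r < n then w r else (⇑f)^[i₀ + (r - n)] q with hWdef
    set u : ℤ → X := fun t => W ((t % P).toNat) with hudef
    have hu_nat : ∀ t : ℕ, u (t : ℤ) = W (t % P) := by
      intro t
      have e : ((t : ℤ) % (P : ℤ)) = ((t % P : ℕ) : ℤ) := by exact_mod_cast rfl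
      simp only [hudef, e, Int.toNat_natCast]
    have hu_per : ∀ t : ℤ, u (t + (P : ℤ)) = u t := by
      intro t
      have e : (t + (P : ℤ)) % P = t % P := by
        simpa using Int.add_mul_emod_self_left (a := t) (b := (P : ℤ)) (c := 1)
      simp only [hudef, e]
    -- the jump bound in ℕ form
    have hjump : ∀ r : ℕ, r < P → dist (f (W r)) (W ((r + 1) % P)) < δ := by
      intro r hr
      by_cases h1 : r + 1 < n
      · rw [Nat.mod_eq_of_lt (by omega)]
        have e1 : W r = w r := if_pos (by omega)
        have e2 : W (r + 1) = w (r + 1) := if_pos h1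
        rw [e1, e2, hw r h1, dist_self]
        exact hδpos
      · by_cases h2 : r + 1 = n
        · rw [Nat.mod_eq_of_lt (by omega), h2]
          have e1 : W r = w (n - 1) := by
            rw [hWdef]; simp only
            rw [if_pos (by omega)]
            congr 1; omega
          have e2 : W n = (⇑f)^[i₀] q := by
            rw [hWdef]; simp only
            rw [if_neg (by omega)]
            congr 1; omega
          rw [e1, e2]
          exact hia
        · by_cases h3 : r + 1 < P
          · rw [Nat.mod_eq_of_lt (by omega)]
            have e1 : W r = (⇑f)^[i₀ + (r - n)] q := if_neg (by omega)
            have e2 : W (r + 1) = (⇑f)^[i₀ + (r - n) + 1] q := by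
              rw [hWdef]; simp only
              rw [if_neg (by omega)]
              congr 1; omega
            rw [e1, e2, ← Function.iterate_succ_apply' f, dist_self]
            exact hδpos
          · have h4 : r + 1 = P := by omega
            have e0 : (r + 1) % P = 0 := by rw [h4, Nat.mod_self]
            rw [e0]
            have e1 : W r = (⇑f)^[i₀ + L - 1] q := by
              rw [hWdef]; simp only
              rw [if_neg (by omega)]
              congr 1; omega
            have e2 : W 0 = w 0 := if_pos (by omega)
            have e3 : f ((⇑f)^[i₀ + L - 1] q) = (⇑f)^[i₀ + L] q := by
              rw [← Function.iterate_succ_apply' f]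
              congr 1; omega
            rw [e1, e2, e3, hiter, dist_comm]
            exact hkb
    -- u is a periodic δ-pseudo-orbit
    have hpseudo : ∀ t : ℤ, dist (f (u t)) (u (t + 1)) < δ := by
      intro t
      have hnn : (0 : ℤ) ≤ t % P := Int.emod_nonneg t (by exact_mod_cast hPpos.ne')
      have hlt : t % P < (P : ℤ) := Int.emod_lt_of_pos t (by exact_mod_cast hPpos)
      set r : ℕ := (t % P).toNat with hrdef
      have hrt : ((r : ℤ)) = t % P := Int.toNat_of_nonneg hnn
      have hrP : r < P := by
        have h5 : (r : ℤ) < (P : ℤ) := by rw [hrt]; exact hlt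
        exact_mod_cast h5
      have hut : u t = W r := rfl
      have hut1 : u (t + 1) = W ((r + 1) % P) := by
        have hmodeq : t % (P : ℤ) = (r : ℤ) % P := by
          rw [← hrt, Int.emod_eq_of_lt (by positivity) (by exact_mod_cast hrP)]
        have e1 : (t + 1) % P = (((r : ℤ)) + 1) % P :=
          Int.ModEq.add_right 1 hmodeq
        have e2 : (((r : ℤ)) + 1) % P = (((r + 1) % P : ℕ) : ℤ) := by exact_mod_cast rfl
        simp only [hudef, e1, e2, Int.toNat_natCast]
      rw [hut, hut1]
      exact hjump r hrP
    -- shadow it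
    obtain ⟨z, hzper, hzsh⟩ := hshad u hpseudo ⟨P, hPpos, hu_per⟩
    obtain ⟨m', hm'1, hm'per⟩ := hzper
    have hzperiodic : Function.IsPeriodicPt (⇑f) m' z := hm'per
    set π : ℕ := Function.minimalPeriod (⇑f) z with hπdef
    have hπpos : 0 < π := hzperiodic.minimalPeriod_pos hm'1
    have hπN : N < π := P5 z ⟨m', hm'1, hm'per⟩
    obtain ⟨hφz, hψz⟩ := P2 z hπN
    have hzπ : (⇑f)^[π] z = z := Function.iterate_minimalPeriod
    have hzπper : Function.IsPeriodicPt (⇑f) π z := hzπ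
    -- the main estimate, uniform in g
    have main : ∀ g : X → ℝ, (∀ y : X, |g y| ≤ M) →
        (∀ a b : X, dist a b < ε → |g a - g b| < η) →
        (∑ i ∈ Finset.range π, g ((⇑f)^[i] z) < (π : ℝ) * Real.log lam) →
        ∑ r ∈ Finset.range n, g (w r) ≤ m * M + n * θ := by
      intro g hgM hgU hgz
      set T : ℕ := P * π with hTdef
      -- sum along z over T steps
      have hA : ∑ t ∈ Finset.range T, g ((⇑f)^[t] z)
          = (P : ℝ) * ∑ i ∈ Finset.range π, g ((⇑f)^[i] z) := by
        have e : ∀ t ∈ Finset.range T, g ((⇑f)^[t] z) = g ((⇑f)^[t % π] z) := by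
          intro t ht
          rw [hzπper.iterate_mod_apply t]
        rw [Finset.sum_congr rfl e, hTdef, sum_mod_block' (fun i => g ((⇑f)^[i] z)) π P]
      -- sum along u over T steps
      have hB : ∑ t ∈ Finset.range T, g (u (t : ℤ))
          = (π : ℝ) * ∑ r ∈ Finset.range P, g (W r) := by
        have e : ∀ t ∈ Finset.range T, g (u (t : ℤ)) = g (W (t % P)) := by
          intro t ht; rw [hu_nat t]
        rw [Finset.sum_congr rfl e, hTdef, mul_comm P π,
          sum_mod_block' (fun r => g (W r)) P π]
      -- termwise comparison
      have hcomp : ∀ t ∈ Finset.range T, g (u (t : ℤ)) - η ≤ g ((⇑f)^[t] z) := by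
        intro t ht
        have hd := hzsh (t : ℤ)
        rw [homeo_zpow_natCast' f t z] at hd
        have := hgU ((⇑f)^[t] z) (u (t : ℤ)) hd
        have h2 := abs_lt.mp this
        linarith [h2.1, h2.2]
      have hsum : ∑ t ∈ Finset.range T, g (u (t : ℤ)) - T * η
          ≤ ∑ t ∈ Finset.range T, g ((⇑f)^[t] z) := by
        have h6 := Finset.sum_le_sum hcomp
        rw [Finset.sum_sub_distrib, Finset.sum_const, Finset.card_range,
          nsmul_eq_mul] at h6
        linarith [h6]
      -- split the P-sum
      have hsplit : ∑ r ∈ Finset.range P, g (W r)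
          = ∑ r ∈ Finset.range n, g (w r) + ∑ j ∈ Finset.range L, g (W (n + j)) := by
        rw [hPdef, Finset.sum_range_add]
        congr 1
        refine Finset.sum_congr rfl fun r hr => ?_
        rw [hWdef]; simp only
        rw [if_pos (Finset.mem_range.mp hr)]
      have htail : -(L : ℝ) * M ≤ ∑ j ∈ Finset.range L, g (W (n + j)) := by
        have : ∀ j ∈ Finset.range L, -M ≤ g (W (n + j)) := by
          intro j hj
          have := abs_le.mp (hgM (W (n + j)))
          linarith [this.1]
        have h2 := Finset.sum_le_sum this
        rw [Finset.sum_const, Finset.card_range, nsmul_eq_mul] at h2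
        linarith [h2]
      -- put everything together
      have hchain : (π : ℝ) * (∑ r ∈ Finset.range n, g (w r) + ∑ j ∈ Finset.range L, g (W (n + j)))
          - (T : ℝ) * η ≤ (P : ℝ) * ((π : ℝ) * Real.log lam) := by
        calc (π : ℝ) * (∑ r ∈ Finset.range n, g (w r) + ∑ j ∈ Finset.range L, g (W (n + j)))
            - (T : ℝ) * η
            = ∑ t ∈ Finset.range T, g (u (t : ℤ)) - T * η := by rw [hB, hsplit]
          _ ≤ ∑ t ∈ Finset.range T, g ((⇑f)^[t] z) := hsum
          _ = (P : ℝ) * ∑ i ∈ Finset.range π, g ((⇑f)^[i] z) := hA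
          _ ≤ (P : ℝ) * ((π : ℝ) * Real.log lam) := by
              apply mul_le_mul_of_nonneg_left (le_of_lt hgz) (by positivity)
      -- divide by π and conclude
      have hπR : (0 : ℝ) < (π : ℝ) := by exact_mod_cast hπpos
      have hTR : (T : ℝ) = (P : ℝ) * (π : ℝ) := by rw [hTdef]; push_cast; ring
      have hPR : (P : ℝ) = (n : ℝ) + (L : ℝ) := by rw [hPdef]; push_cast; ring
      have hstep : ∑ r ∈ Finset.range n, g (w r) ≤ (L : ℝ) * M + (P : ℝ) * θ := by
        rw [hTR] at hchain
        have h2 : (π : ℝ) * (∑ r ∈ Finset.range n, g (w r))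
            ≤ (π : ℝ) * ((L : ℝ) * M + (P : ℝ) * θ) := by
          rw [← hlogθ]
          nlinarith [htail, hchain, hπR]
        exact le_of_mul_le_mul_left (by linarith [h2]) hπR
      have hLM : (L : ℝ) * M ≤ (m : ℝ) * M := by
        have : (L : ℝ) ≤ (m : ℝ) := by exact_mod_cast hLm
        nlinarith
      have hPθ : (P : ℝ) * θ ≤ (n : ℝ) * θ := by
        have : (n : ℝ) ≤ (P : ℝ) := by exact_mod_cast le_of_lt hnP
        nlinarith
      linarith [hstep, hLM, hPθ]
    exact ⟨main φ (fun y => (hMb y).1) hUφ' hφz, main ψ (fun y => (hMb y).2) hUψ' hψz⟩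
  constructor
  · refine (key (fun r => (⇑f)^[r] x) ?_).1
    intro r hr
    exact (Function.iterate_succ_apply' f r x).symm
  · have h2 := (key (fun r => (⇑f.symm)^[n - 1 - r] x) ?_).2
    · rw [← Finset.sum_range_reflect (fun i => ψ ((⇑f.symm)^[i] x)) n]
      exact h2
    · intro r hr
      show f ((⇑f.symm)^[n - 1 - r] x) = (⇑f.symm)^[n - 1 - (r + 1)] x
      have e : n - 1 - r = (n - 1 - (r + 1)) + 1 := by omega
      rw [e, Function.iterate_succ_apply' f.symm]
      exact f.apply_symm_apply _
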